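/- For a TBPP instance, for each item j let S̄_j denote the set of items active at time s_j, and call j non-dominated if there is no item k with S̄_j ⊊ S̄_k. Then an assignment f of items to bins is feasible if and only if, for every non-dominated item j, the capacity constraint holds at time s_j (for every bin i, the total weight of items k with f(k)=i active at s_j is at most W). In particular, whenever S̄_j ⊆ S̄_k, feasibility of f at time s_k implies feasibility of f at time s_j. -/
import Mathlib


open Finset

private lemma tbpp_mono {n : ℕ} {I : Type*} [DecidableEq I]
    (W : ℤ) (w : Fin n → ℤ) (hw : ∀ j, 0 < w j ∧ w j ≤ W)
    (s t : Fin n → ℕ) (f : Fin n → I) (τ₁ τ₂ : ℕ)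
    (h : univ.filter (fun ℓ => s ℓ ≤ τ₁ ∧ τ₁ < t ℓ)
        ⊆ univ.filter (fun ℓ => s ℓ ≤ τ₂ ∧ τ₂ < t ℓ))
    (h2 : ∀ i : I, ∑ k ∈ univ.filter (fun k => f k = i ∧ s k ≤ τ₂ ∧ τ₂ < t k), w k ≤ W) :
    ∀ i : I, ∑ k ∈ univ.filter (fun k => f k = i ∧ s k ≤ τ₁ ∧ τ₁ < t k), w k ≤ W := by
  intro i
  refine le_trans (Finset.sum_le_sum_of_subset_of_nonneg ?_ ?_) (h2 i)
  · intro k hk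
    simp only [mem_filter, mem_univ, true_and] at hk ⊢
    have hk2 : k ∈ univ.filter (fun ℓ => s ℓ ≤ τ₂ ∧ τ₂ < t ℓ) := by
      apply h
      simp only [mem_filter, mem_univ, true_and]
      exact hk.2
    simp only [mem_filter, mem_univ, true_and] at hk2
    exact ⟨hk.1, hk2⟩
  · intro k _ _
    exact (hw k).1.le

/-- Feasibility of a TBPP assignment is equivalent to feasibility at the
starting times of the non-dominated items (items `j` such that no item `k` satisfies
`S̄_j ⊊ S̄_k`, where `S̄_j` is the set of items active at time `s j`).  Moreover,
whenever `S̄_j ⊆ S̄_k`, feasibility at time `s k` implies feasibility at time `s j`. -/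
theorem tbpp_feasible_iff_feasible_at_nondominated
    {n : ℕ} {I : Type*} [DecidableEq I]
    (W : ℤ) (hW : 0 < W)
    (w : Fin n → ℤ) (hw : ∀ j, 0 < w j ∧ w j ≤ W)
    (s t : Fin n → ℕ) (hst : ∀ j, s j < t j)
    (f : Fin n → I) :
    ((∀ τ : ℕ, ∀ i : I,
        ∑ k ∈ univ.filter (fun k => f k = i ∧ s k ≤ τ ∧ τ < t k), w k ≤ W)
      ↔
      (∀ j : Fin n,
        (¬ ∃ k : Fin n,
            univ.filter (fun ℓ => s ℓ ≤ s j ∧ s j < t ℓ)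
              ⊂ univ.filter (fun ℓ => s ℓ ≤ s k ∧ s k < t ℓ)) →
        ∀ i : I,
          ∑ k ∈ univ.filter (fun k => f k = i ∧ s k ≤ s j ∧ s j < t k), w k ≤ W))
    ∧
    (∀ j k : Fin n,
        univ.filter (fun ℓ => s ℓ ≤ s j ∧ s j < t ℓ)
          ⊆ univ.filter (fun ℓ => s ℓ ≤ s k ∧ s k < t ℓ) →
        (∀ i : I,
          ∑ k' ∈ univ.filter (fun k' => f k' = i ∧ s k' ≤ s k ∧ s k < t k'), w k' ≤ W) →
        (∀ i : I,
          ∑ k' ∈ univ.filter (fun k' => f k' = i ∧ s k' ≤ s j ∧ s j < t k'), w k' ≤ W)) := by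
  constructor
  · constructor
    · intro hfeas j _ i
      exact hfeas (s j) i
    · intro h τ i
      set A := univ.filter (fun ℓ => s ℓ ≤ τ ∧ τ < t ℓ) with hA
      rcases A.eq_empty_or_nonempty with hAe | hAne
      · have : univ.filter (fun k => f k = i ∧ s k ≤ τ ∧ τ < t k) = ∅ := by
          apply Finset.eq_empty_of_forall_notMem
          intro k hk
          simp only [mem_filter, mem_univ, true_and] at hk
          have : k ∈ A := by
            simp only [hA, mem_filter, mem_univ, true_and]; exact hk.2
          simp [hAe] at this
        rw [this]
        simpa using hW.le
      · -- pick j ∈ A with maximal s j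
        obtain ⟨j, hjA, hjmax⟩ := A.exists_max_image s hAne
        have hAj : A ⊆ univ.filter (fun ℓ => s ℓ ≤ s j ∧ s j < t ℓ) := by
          intro k hk
          have hk' := hk
          simp only [hA, mem_filter, mem_univ, true_and] at hk'
          simp only [hA, mem_filter, mem_univ, true_and] at hjA
          simp only [mem_filter, mem_univ, true_and]
          exact ⟨hjmax k hk, lt_of_le_of_lt hjA.1 hk'.2⟩
        -- pick j' maximizing card of active set among those dominating j
        set D := univ.filter (fun k : Fin n =>
          univ.filter (fun ℓ => s ℓ ≤ s j ∧ s j < t ℓ)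
            ⊆ univ.filter (fun ℓ => s ℓ ≤ s k ∧ s k < t ℓ)) with hD
        have hjD : j ∈ D := by
          simp only [hD, mem_filter, mem_univ, true_and]
          exact Finset.Subset.refl _
        obtain ⟨j', hj'D, hj'max⟩ := D.exists_max_image
          (fun k => (univ.filter (fun ℓ => s ℓ ≤ s k ∧ s k < t ℓ)).card) ⟨j, hjD⟩
        simp only [hD, mem_filter, mem_univ, true_and] at hj'D
        have hnd : ¬ ∃ k : Fin n,
            univ.filter (fun ℓ => s ℓ ≤ s j' ∧ s j' < t ℓ)
              ⊂ univ.filter (fun ℓ => s ℓ ≤ s k ∧ s k < t ℓ) := by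
          rintro ⟨m, hm⟩
          have hmD : m ∈ D := by
            simp only [hD, mem_filter, mem_univ, true_and]
            exact hj'D.trans hm.subset
          have := hj'max m hmD
          exact absurd (Finset.card_lt_card hm) (not_lt.mpr this)
        have hfj' := h j' hnd
        have hsub : univ.filter (fun ℓ => s ℓ ≤ τ ∧ τ < t ℓ)
            ⊆ univ.filter (fun ℓ => s ℓ ≤ s j' ∧ s j' < t ℓ) := by
          rw [← hA]; exact hAj.trans hj'D
        exact tbpp_mono W w hw s t f τ (s j') hsub hfj' i
  · intro j k hsub hfk
    exact tbpp_mono W w hw s t f (s j) (s k) hsub hfk
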